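/- Let G be a group of order 27 in which some element has order 9 and which is nonabelian. Then G is isomorphic to the semidirect product C₉ ⋊ C₃ where the generator of C₃ acts on C₉ = ℤ/9ℤ by multiplication by 4. -/
import Mathlib


/-- The semidirect product `ℤ/9ℤ ⋊ ℤ/3ℤ`, where the generator of `ℤ/3ℤ` acts on
`ℤ/9ℤ` by multiplication by `4`. -/
def SD27 : Type := ZMod 9 × ZMod 3

instance : Group SD27 where
  mul x y := (x.1 + 4 ^ x.2.val * y.1, x.2 + y.2)
  one := ((0 : ZMod 9), (0 : ZMod 3))
  inv x := (-(4 ^ (-x.2).val * x.1), -x.2)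
  mul_assoc := by
    rintro ⟨a, i⟩ ⟨b, j⟩ ⟨c, k⟩
    have h : ∀ i j : ZMod 3, (4 : ZMod 9) ^ (i + j).val = 4 ^ i.val * 4 ^ j.val := by
      decide
    show ((a + 4 ^ i.val * b + 4 ^ (i + j).val * c, i + j + k) : ZMod 9 × ZMod 3) =
      (a + 4 ^ i.val * (b + 4 ^ j.val * c), i + (j + k))
    exact Prod.ext (by rw [h]; ring) (add_assoc i j k)
  one_mul := by
    rintro ⟨a, i⟩
    show (((0 : ZMod 9) + 4 ^ (0 : ZMod 3).val * a, 0 + i) : ZMod 9 × ZMod 3) = (a, i)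
    exact Prod.ext (by norm_num) (zero_add i)
  mul_one := by
    rintro ⟨a, i⟩
    show ((a + 4 ^ i.val * 0, i + 0) : ZMod 9 × ZMod 3) = (a, i)
    exact Prod.ext (by ring) (add_zero i)
  inv_mul_cancel := by
    rintro ⟨a, i⟩
    show ((-(4 ^ (-i).val * a) + 4 ^ (-i).val * a, -i + i) : ZMod 9 × ZMod 3) =
      ((0 : ZMod 9), (0 : ZMod 3))
    exact Prod.ext (by ring) (neg_add_cancel i)

/-- Any nonabelian group of order 27 containing an element of order 9 is
isomorphic to `ℤ/9ℤ ⋊ ℤ/3ℤ` with the generator of `ℤ/3ℤ` acting by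
multiplication by 4. -/
theorem stmt_15 {G : Type*} [Group G] (h27 : Nat.card G = 27)
    (h9 : ∃ g : G, orderOf g = 9) (hna : ¬ ∀ x y : G, x * y = y * x) :
    Nonempty (G ≃* SD27) := by
  have hfinG : Finite G := Nat.finite_of_card_ne_zero (by rw [h27]; norm_num)
  obtain ⟨g, hg⟩ := h9
  set H := Subgroup.zpowers g with hHdef
  have hcardH : Nat.card H = 9 := by rw [hHdef, Nat.card_zpowers, hg]
  haveI hp3 : Fact (Nat.Prime 3) := ⟨by norm_num⟩
  -- any subgroup containing H is H or ⊤
  have hsup : ∀ K : Subgroup G, H ≤ K → K = H ∨ K = ⊤ := by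
    intro K hK
    have h1 : Nat.card K ∣ 27 := h27 ▸ Subgroup.card_subgroup_dvd_card K
    have h2 : 9 ∣ Nat.card K := hcardH ▸ Subgroup.card_dvd_of_le hK
    have hd3 : Nat.card K = 9 ∨ Nat.card K = 27 := by
      have l1 : Nat.card K ≤ 27 := Nat.le_of_dvd (by norm_num) h1
      have l2 : 9 ≤ Nat.card K := Nat.le_of_dvd Nat.card_pos h2
      interval_cases h : Nat.card K <;> omega
    rcases hd3 with h | h
    · exact Or.inl (Subgroup.eq_of_le_of_card_ge hK (by rw [h, hcardH])).symm
    · exact Or.inr (Subgroup.eq_top_of_card_eq K (by rw [h, h27]))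
  have hHnetop : H ≠ ⊤ := by
    intro h
    rw [h, Subgroup.card_top, h27] at hcardH
    norm_num at hcardH
  haveI hnormal : H.Normal := by
    have hpg : IsPGroup 3 G := IsPGroup.of_card (n := 3) (by rw [h27]; norm_num)
    haveI := hpg.isNilpotent
    refine Subgroup.NormalizerCondition.normal_of_coatom H normalizerCondition_of_isNilpotent ⟨hHnetop, ?_⟩
    · intro K hK
      rcases hsup K hK.le with h | h
      · exact absurd h.symm hK.ne
      · exact h
  -- every cube lies in H
  have hindex : Nat.card (G ⧸ H) = 3 := by
    have h1 := Subgroup.card_mul_index H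
    rw [hcardH, h27] at h1
    have h2 : H.index = 3 := by omega
    exact h2
  have hcube : ∀ x : G, x ^ 3 ∈ H := by
    intro x
    have h1 : ((x : G ⧸ H)) ^ 3 = 1 := by rw [← hindex]; exact pow_card_eq_one'
    rwa [← QuotientGroup.mk_pow, QuotientGroup.eq_one_iff] at h1
  -- membership in H gives a natural power
  have hord9 : g ^ (9 : ℕ) = 1 := by rw [← hg]; exact pow_orderOf_eq_one g
  have hmem : ∀ h : G, h ∈ H → ∃ n : ℕ, g ^ n = h := by
    intro h hh
    obtain ⟨k, hk⟩ := Subgroup.mem_zpowers_iff.mp hh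
    refine ⟨(k % 9).toNat, ?_⟩
    have hz := zpow_mod_orderOf g k
    rw [hg] at hz
    rw [← hk, ← hz, ← zpow_natCast, Int.toNat_of_nonneg (Int.emod_nonneg k (by norm_num))]
    norm_num
  have gpow : ∀ n : ℕ, g ^ n = g ^ ((n : ZMod 9)).val := by
    intro n
    rw [ZMod.val_natCast]
    have hpm := pow_mod_orderOf g n
    rw [hg] at hpm
    exact hpm.symm
  have gcongr : ∀ m n : ℕ, ((m : ZMod 9)) = ((n : ZMod 9)) → g ^ m = g ^ n := by
    intro m n h
    rw [gpow m, gpow n, h]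
  have gone : ∀ n : ℕ, 9 ∣ n → g ^ n = 1 := by
    intro n hn
    exact orderOf_dvd_iff_pow_eq_one.mp (by rw [hg]; exact hn)
  -- a t₀ outside H
  obtain ⟨t₀, ht₀⟩ : ∃ t₀ : G, t₀ ∉ H := by
    by_contra hcon
    push_neg at hcon
    exact hHnetop ((Subgroup.eq_top_iff' H).mpr hcon)
  have conjpow : ∀ (u x : G) (m : ℕ), u * x ^ m * u⁻¹ = (u * x * u⁻¹) ^ m := by
    intro u x m
    induction m with
    | zero => simp
    | succ i ih => rw [pow_succ, pow_succ, ← ih]; group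
  obtain ⟨n₀, hn₀⟩ := hmem _ (hnormal.conj_mem g (Subgroup.mem_zpowers g) t₀)
  have hconj : ∀ m : ℕ, t₀ * g ^ m * t₀⁻¹ = g ^ (n₀ * m) := by
    intro m
    rw [conjpow, ← hn₀, ← pow_mul]
  obtain ⟨c₀, hc₀⟩ := hmem _ (hcube t₀)
  have hk3 : ((n₀ : ZMod 9)) ^ 3 = 1 := by
    have e1 : t₀ ^ 3 * g * (t₀ ^ 3)⁻¹ = g ^ (n₀ * (n₀ * n₀)) := by
      calc t₀ ^ 3 * g * (t₀ ^ 3)⁻¹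
          = t₀ * (t₀ * (t₀ * g * t₀⁻¹) * t₀⁻¹) * t₀⁻¹ := by
            rw [pow_succ, pow_succ, pow_one]; group
        _ = t₀ * (t₀ * g ^ n₀ * t₀⁻¹) * t₀⁻¹ := by rw [← hn₀]
        _ = t₀ * g ^ (n₀ * n₀) * t₀⁻¹ := by rw [hconj]
        _ = g ^ (n₀ * (n₀ * n₀)) := hconj _
    have e2 : t₀ ^ 3 * g * (t₀ ^ 3)⁻¹ = g := by
      rw [← hc₀, show g ^ c₀ * g * (g ^ c₀)⁻¹ = g from by
        rw [← pow_succ, pow_succ', mul_inv_cancel_right]]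
    have e3 : g ^ (n₀ * (n₀ * n₀)) = g ^ (1 : ℕ) := by rw [← e1, e2, pow_one]
    have e4 := (pow_eq_pow_iff_modEq).mp e3
    rw [hg] at e4
    have e5 := (ZMod.natCast_eq_natCast_iff _ _ _).mpr e4
    push_cast at e5
    rw [← e5]; ring
  have hcases : ((n₀ : ZMod 9)) = 1 ∨ ((n₀ : ZMod 9)) = 4 ∨ ((n₀ : ZMod 9)) = 7 := by
    have : ∀ x : ZMod 9, x ^ 3 = 1 → x = 1 ∨ x = 4 ∨ x = 7 := by decide
    exact this _ hk3
  rcases hcases with hk1 | hk47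
  · -- t₀ commutes with g : contradiction with nonabelian
    exfalso
    have hcomm : t₀ * g = g * t₀ := by
      have e1 : t₀ * g * t₀⁻¹ = g := by
        rw [← hn₀, gcongr n₀ 1 (by rw [hk1]; simp), pow_one]
      exact mul_inv_eq_iff_eq_mul.mp e1
    have hCent : Subgroup.centralizer {g} = ⊤ := by
      have hle : H ≤ Subgroup.centralizer {g} := by
        rw [hHdef, Subgroup.zpowers_le]
        exact Subgroup.mem_centralizer_singleton_iff.mpr rfl
      rcases hsup _ hle with h | h
      · exfalso
        exact ht₀ (h ▸ Subgroup.mem_centralizer_singleton_iff.mpr hcomm)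
      · exact h
    have hgcen : H ≤ Subgroup.center G := by
      rw [hHdef, Subgroup.zpowers_le]
      rw [Subgroup.mem_center_iff]
      intro x
      have : x ∈ Subgroup.centralizer {g} := hCent ▸ Subgroup.mem_top x
      exact Subgroup.mem_centralizer_singleton_iff.mp this
    rcases hsup _ hgcen with hc | hc
    · have hcardc : Nat.card (G ⧸ Subgroup.center G) = 3 := by
        have h1 := Subgroup.card_mul_index H
        rw [hcardH, h27] at h1
        have hidx : H.index = 3 := by omega
        show (Subgroup.center G).index = 3
        rw [hc]
        exact hidx
      haveI : IsCyclic (G ⧸ Subgroup.center G) := isCyclic_of_prime_card hcardc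
      exact hna fun x y =>
        commutative_of_cyclic_center_quotient (QuotientGroup.mk' (Subgroup.center G))
          (le_of_eq (QuotientGroup.ker_mk' _)) x y
    · exact hna fun x y =>
        Subgroup.mem_center_iff.mp (hc ▸ Subgroup.mem_top y) x
  · -- get t₁ with t₁ g t₁⁻¹ = g ^ 4
    obtain ⟨t₁, ht₁H, ht₁3, ht₁c⟩ :
        ∃ t₁ : G, t₁ ∉ H ∧ t₁ ^ 3 ∈ H ∧ t₁ * g * t₁⁻¹ = g ^ (4:ℕ) := by
      rcases hk47 with hk4 | hk7
      · exact ⟨t₀, ht₀, hcube t₀, by rw [← hn₀]; exact gcongr n₀ 4 (by rw [hk4]; decide)⟩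
      · refine ⟨t₀ ^ 2, ?_, by rw [← pow_mul]; exact (by rw [pow_mul]; exact pow_mem (hcube t₀) 2 : t₀ ^ (3*2) ∈ H), ?_⟩
        · intro hmem2
          apply ht₀
          have h1 : t₀ ^ 3 * (t₀ ^ 2)⁻¹ ∈ H := mul_mem (hcube t₀) (inv_mem hmem2)
          have h2 : t₀ ^ 3 * (t₀ ^ 2)⁻¹ = t₀ := by group
          rwa [h2] at h1
        · calc t₀ ^ 2 * g * (t₀ ^ 2)⁻¹
              = t₀ * (t₀ * g * t₀⁻¹) * t₀⁻¹ := by rw [pow_two]; group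
            _ = t₀ * g ^ n₀ * t₀⁻¹ := by rw [← hn₀]
            _ = g ^ (n₀ * n₀) := hconj _
            _ = g ^ (4:ℕ) := gcongr _ 4 (by push_cast; rw [hk7]; decide)
    -- t₁ ^ 3 = g ^ c₁ with 3 ∣ c₁
    obtain ⟨c₁, hc₁⟩ := hmem _ ht₁3
    have ht₁n : ∀ m : ℕ, t₁ * g ^ m * t₁⁻¹ = g ^ (4 * m) := by
      intro m
      rw [conjpow, ht₁c, ← pow_mul]
    have h3c₁ : 3 ∣ c₁ := by
      have e1 : t₁ * g ^ c₁ * t₁⁻¹ = g ^ c₁ := by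
        rw [hc₁, show t₁ * t₁ ^ 3 * t₁⁻¹ = t₁ ^ 3 from by group]
      rw [ht₁n] at e1
      have e2 := (pow_eq_pow_iff_modEq).mp e1
      rw [hg] at e2
      have e3 : 4 * c₁ % 9 = c₁ % 9 := e2
      omega
    -- adjust to get t of order dividing 3
    set a := 2 * (c₁ / 3) with hadef
    set t := t₁ * g ^ a with htdef
    have htH : t ∉ H := by
      intro hmem2
      apply ht₁H
      have h1 : t * (g ^ a)⁻¹ ∈ H := mul_mem hmem2 (inv_mem (pow_mem (Subgroup.mem_zpowers g) a))
      have h2 : t * (g ^ a)⁻¹ = t₁ := by rw [htdef]; group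
      rwa [h2] at h1
    have hswap : ∀ m : ℕ, t₁ * g ^ m = g ^ (4 * m) * t₁ := by
      intro m
      exact mul_inv_eq_iff_eq_mul.mp (ht₁n m)
    have hswap' : ∀ (m : ℕ) (x : G), t₁ * (g ^ m * x) = g ^ (4 * m) * (t₁ * x) := by
      intro m x
      rw [← mul_assoc, hswap, mul_assoc]
    have gmul : ∀ (m n : ℕ) (x : G), g ^ m * (g ^ n * x) = g ^ (m + n) * x := by
      intro m n x
      rw [← mul_assoc, ← pow_add]
    have ht3 : t ^ 3 = 1 := by
      have e0 : t ^ 3 = t₁ * (g ^ a * (t₁ * (g ^ a * (t₁ * g ^ a)))) := by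
        rw [htdef, pow_succ, pow_two]
        simp only [mul_assoc]
      rw [e0, hswap a, gmul, hswap', hswap', hswap', gmul,
        show t₁ * (t₁ * t₁) = t₁ ^ 3 from by rw [pow_succ, pow_two, mul_assoc], ← hc₁, ← pow_add]
      exact gone _ (by omega)
    have htc : t * g * t⁻¹ = g ^ (4:ℕ) := by
      have h1 : t * g * t⁻¹ = t₁ * (g ^ a * g * (g ^ a)⁻¹) * t₁⁻¹ := by rw [htdef]; group
      rw [h1, show g ^ a * g * (g ^ a)⁻¹ = g from by
        rw [← pow_succ, pow_succ', mul_inv_cancel_right], ht₁c]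
    have hswapT : ∀ m : ℕ, t * g ^ m = g ^ (4 * m) * t := by
      intro m
      have h1 := conjpow t g m
      rw [htc, ← pow_mul] at h1
      exact mul_inv_eq_iff_eq_mul.mp h1
    have hit : ∀ i m : ℕ, t ^ i * g ^ m = g ^ (4 ^ i * m) * t ^ i := by
      intro i
      induction i with
      | zero => intro m; simp
      | succ n ih =>
        intro m
        calc t ^ (n+1) * g ^ m = t * (t ^ n * g ^ m) := by rw [pow_succ']; group
          _ = t * (g ^ (4 ^ n * m) * t ^ n) := by rw [ih]
          _ = t * g ^ (4 ^ n * m) * t ^ n := (mul_assoc _ _ _).symm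
          _ = g ^ (4 * (4 ^ n * m)) * t * t ^ n := by rw [hswapT]
          _ = g ^ (4 ^ (n+1) * m) * t ^ (n+1) := by
              rw [mul_assoc, ← pow_succ', show 4 * (4 ^ n * m) = 4 ^ (n+1) * m from by ring]
    -- t-power congruence
    have tpow : ∀ n : ℕ, t ^ n = t ^ (n % 3) := by
      intro n
      conv_lhs => rw [← Nat.mod_add_div n 3]
      rw [pow_add, pow_mul, ht3, one_pow, mul_one]
    have tcongr : ∀ m n : ℕ, ((m : ZMod 3)) = ((n : ZMod 3)) → t ^ m = t ^ n := by
      intro m n h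
      rw [tpow m, tpow n, (ZMod.natCast_eq_natCast_iff' _ _ _).mp h]
    -- the homomorphism
    let φ : SD27 →* G :=
      { toFun := fun x => g ^ (x.1.val) * t ^ (x.2.val)
        map_one' := by
          show g ^ ((0 : ZMod 9)).val * t ^ ((0 : ZMod 3)).val = 1
          simp
        map_mul' := by
          rintro ⟨A, i⟩ ⟨B, j⟩
          show g ^ ((A + 4 ^ i.val * B : ZMod 9)).val * t ^ ((i + j : ZMod 3)).val =
            (g ^ A.val * t ^ i.val) * (g ^ B.val * t ^ j.val)
          have e1 : g ^ ((A + 4 ^ i.val * B : ZMod 9)).val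
              = g ^ (A.val + 4 ^ i.val * B.val) := by
            apply gcongr
            push_cast [ZMod.natCast_val, ZMod.cast_id]
            ring
          have e2 : t ^ ((i + j : ZMod 3)).val = t ^ (i.val + j.val) := by
            apply tcongr
            push_cast [ZMod.natCast_val, ZMod.cast_id]
            ring
          rw [e1, e2, pow_add, pow_add,
            show g ^ A.val * g ^ (4 ^ i.val * B.val) * (t ^ i.val * t ^ j.val)
              = g ^ A.val * (g ^ (4 ^ i.val * B.val) * t ^ i.val) * t ^ j.val from by group,
            ← hit i.val B.val]
          group }
    have hinj : Function.Injective φ := by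
      apply (injective_iff_map_eq_one φ).mpr
      rintro ⟨A, i⟩ hA
      have h' : g ^ A.val * t ^ i.val = 1 := hA
      have hiv : i.val < 3 := ZMod.val_lt i
      have hAv : A.val < 9 := ZMod.val_lt A
      have hcases : i.val = 0 ∨ i.val = 1 ∨ i.val = 2 := by omega
      rcases hcases with h0 | h1 | h2
      · rw [h0, pow_zero, mul_one] at h'
        have hdvd : 9 ∣ A.val := by
          have hx := orderOf_dvd_of_pow_eq_one h'
          rwa [hg] at hx
        have hA00 : A.val = 0 := Nat.eq_zero_of_dvd_of_lt hdvd hAv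
        rw [(ZMod.val_eq_zero A).mp hA00, (ZMod.val_eq_zero i).mp h0]
        rfl
      · exfalso
        rw [h1, pow_one] at h'
        have he : t = (g ^ A.val)⁻¹ := eq_inv_of_mul_eq_one_right h'
        exact htH (he ▸ inv_mem (pow_mem (Subgroup.mem_zpowers g) A.val))
      · exfalso
        rw [h2] at h'
        have he : t ^ 2 = (g ^ A.val)⁻¹ := eq_inv_of_mul_eq_one_right h'
        have h2H : t ^ 2 ∈ H := he ▸ inv_mem (pow_mem (Subgroup.mem_zpowers g) A.val)
        have he2 : t = (t ^ 2)⁻¹ * t ^ 3 := by group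
        rw [ht3, mul_one] at he2
        exact htH (he2 ▸ inv_mem h2H)
    haveI hfinSD : Finite SD27 := inferInstanceAs (Finite (ZMod 9 × ZMod 3))
    have hcardSD : Nat.card SD27 = 27 := by
      have h1 : Nat.card (ZMod 9 × ZMod 3) = 27 := by
        rw [Nat.card_prod, Nat.card_zmod, Nat.card_zmod]
      exact h1
    have hbij : Function.Bijective φ :=
      (Nat.bijective_iff_injective_and_card φ).mpr ⟨hinj, by rw [hcardSD, h27]⟩
    exact ⟨(MulEquiv.ofBijective φ hbij).symm⟩
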